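/- Let f : ℝⁿ → ℝ be convex, ρ > 0, and let x_* be a minimizer of f. If y ∈ ℝⁿ minimizes the function z ↦ f(z) + (1/(2ρ))‖z − x‖² over ℝⁿ, then ‖y − x_*‖ ≤ ‖x − x_*‖. Consequently, the proximal point method iterates x_{k+1} = prox_{ρ,f}(x_k) satisfy ‖x_k − x_*‖ ≤ ‖x_0 − x_*‖ for all k. -/

import Mathlib

noncomputable section

/-- `y` is the prox point `prox_{ρ,f}(x)`, i.e. it minimizes `z ↦ f z + (1/(2ρ))‖z - x‖²`. -/
def IsProx {n : ℕ} (ρ : ℝ) (f : EuclideanSpace ℝ (Fin n) → ℝ)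
    (x y : EuclideanSpace ℝ (Fin n)) : Prop :=
  ∀ z, f y + (1 / (2 * ρ)) * ‖y - x‖ ^ 2 ≤ f z + (1 / (2 * ρ)) * ‖z - x‖ ^ 2

/-- the prox step does not increase distance to a minimizer, and hence the
proximal point iterates stay within the initial distance of a minimizer. -/
theorem prox_nonexpansive_to_min {n : ℕ} (f : EuclideanSpace ℝ (Fin n) → ℝ) (ρ : ℝ)
    (xs : EuclideanSpace ℝ (Fin n))
    (hconv : ConvexOn ℝ Set.univ f)
    (hρ : 0 < ρ)
    (hmin : ∀ y, f xs ≤ f y) :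
    (∀ x y : EuclideanSpace ℝ (Fin n), IsProx ρ f x y → ‖y - xs‖ ≤ ‖x - xs‖) ∧
    (∀ seq : ℕ → EuclideanSpace ℝ (Fin n),
      (∀ k, IsProx ρ f (seq k) (seq (k + 1))) → ∀ k, ‖seq k - xs‖ ≤ ‖seq 0 - xs‖) := by
  have key : ∀ x y : EuclideanSpace ℝ (Fin n), IsProx ρ f x y → ‖y - xs‖ ≤ ‖x - xs‖ := by
    intro x y hy
    set a : ℝ := inner ℝ (y - x) (xs - y) with ha
    set b : ℝ := ‖xs - y‖ ^ 2 with hb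
    have hbnn : (0:ℝ) ≤ b := sq_nonneg _
    have hcpos : (0:ℝ) < 1 / (2 * ρ) := by positivity
    have hineq : ∀ t : ℝ, 0 < t → t ≤ 1 → 0 ≤ 2 * t * a + t ^ 2 * b := by
      intro t ht ht1
      have hz := hy ((1 - t) • y + t • xs)
      have hfz : f ((1 - t) • y + t • xs) ≤ f y := by
        have hc := hconv.2 (Set.mem_univ y) (Set.mem_univ xs)
          (by linarith : (0:ℝ) ≤ 1 - t) (le_of_lt ht) (by ring)
        simp only [smul_eq_mul] at hc
        have := hmin y
        nlinarith
      have hnorm2 : (1 / (2 * ρ)) * ‖y - x‖ ^ 2 ≤ (1 / (2 * ρ)) * ‖(1 - t) • y + t • xs - x‖ ^ 2 := by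
        linarith
      have hnorm : ‖y - x‖ ^ 2 ≤ ‖(1 - t) • y + t • xs - x‖ ^ 2 :=
        (mul_le_mul_iff_right₀ hcpos).mp hnorm2
      have hzsub : (1 - t) • y + t • xs - x = (y - x) + t • (xs - y) := by
        module
      rw [hzsub] at hnorm
      have hexp : ‖(y - x) + t • (xs - y)‖ ^ 2
          = ‖y - x‖ ^ 2 + 2 * (t * a) + t ^ 2 * b := by
        rw [norm_add_sq_real, real_inner_smul_right, norm_smul, hb]
        rw [Real.norm_eq_abs, abs_of_pos ht, mul_pow, ha]
      rw [hexp] at hnorm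
      linarith
    have hann : 0 ≤ a := by
      by_contra h
      push_neg at h
      have hbpos : (0:ℝ) < b + 1 := by linarith
      set t : ℝ := min 1 (-a / (b + 1)) with htd
      have htpos : 0 < t := lt_min one_pos (div_pos (by linarith) hbpos)
      have ht1 : t ≤ 1 := min_le_left _ _
      have ht2 : t ≤ -a / (b + 1) := min_le_right _ _
      have htb : t * (b + 1) ≤ -a := by
        rw [← le_div_iff₀ hbpos]; exact ht2
      have := hineq t htpos ht1
      nlinarith
    have hfin : ‖y - xs‖ ^ 2 ≤ ‖x - xs‖ ^ 2 := by
      have hsplit : x - xs = (x - y) + (y - xs) := by module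
      rw [hsplit, norm_add_sq_real]
      have hia : (inner ℝ (x - y) (y - xs) : ℝ) = a := by
        rw [ha, ← inner_neg_neg]
        congr 1 <;> module
      rw [hia]
      nlinarith [sq_nonneg ‖x - y‖]
    nlinarith [hfin, norm_nonneg (y - xs), norm_nonneg (x - xs)]
  refine ⟨key, ?_⟩
  intro seq hseq k
  induction k with
  | zero => exact le_refl _
  | succ k ih => exact le_trans (key _ _ (hseq k)) ih

end
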